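/- arXiv:math/0602643 — 2 statements merged into one kernel-verified Lean document; each statement's English description precedes it below -/
import Mathlib

section
/- (Theorem 3.1, algebraic form.) Let 0 = x₀ < ⋯ < x_{n+1} = 1 be a grid, ε, b, c reals, f : [0,1] → ℝ continuous. Let A be the n×n matrix with entries A_{ij} = a(φⱼ, φᵢ), and assume A is invertible. Let Uⁿ ∈ ℝⁿ satisfy A·Uⁿ = F where Fⱼ = ∫₀¹ f·φⱼ. Fix s₁ ∈ (xₙ, 1), let φ̃ₙ and φ_{s₁} be the hat functions at xₙ and s₁ on the refined grid, and suppose (u₁, …, uₙ, u_{s₁}) ∈ ℝ^{n+1} satisfies the refined Galerkin system: Σ_{i=1}^{n−1} uᵢ a(φᵢ, ψ) + uₙ a(φ̃ₙ, ψ) + u_{s₁} a(φ_{s₁}, ψ) = ∫₀¹ f·ψ for every ψ ∈ {φ₁, …, φ_{n−1}, φ̃ₙ, φ_{s₁}}. Then Uⁿ − (u₁, …, uₙ) = C·A⁻¹eₙ, where eₙ = (0, …, 0, 1)ᵗ, p = (1 − s₁)/(1 − xₙ), and C = (u_{s₁} − p·uₙ)·a(φ_{s₁}, φₙ). -/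
open Matrix MeasureTheory

/-- The hat (tent) function with support `[l, r]`, peak value 1 at `m`,
equal to `(t - l)/(m - l)` on `[l, m]` and `(r - t)/(r - m)` on `[m, r]`. -/
noncomputable def hat3 (l m r t : ℝ) : ℝ :=
  if l ≤ t ∧ t ≤ m then (t - l) / (m - l)
  else if m ≤ t ∧ t ≤ r then (r - t) / (r - m)
  else 0

/-- The piecewise derivative of `hat3 l m r`. -/
noncomputable def hat3D (l m r t : ℝ) : ℝ :=
  if l < t ∧ t < m then 1 / (m - l)
  else if m < t ∧ t < r then -(1 / (r - m))
  else 0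

/-- The hat function at node `i` of the grid `y`. -/
noncomputable def hatFn (y : ℕ → ℝ) (i : ℕ) : ℝ → ℝ :=
  hat3 (y (i - 1)) (y i) (y (i + 1))

/-- The piecewise derivative of the hat function at node `i` of the grid `y`. -/
noncomputable def hatDeriv (y : ℕ → ℝ) (i : ℕ) : ℝ → ℝ :=
  hat3D (y (i - 1)) (y i) (y (i + 1))

/-- The bilinear form `a(u, v) = ε∫₀¹ u'v' + b∫₀¹ u v' + c∫₀¹ u v`, where the (piecewise)
derivatives `u'`, `v'` are supplied explicitly as `uD`, `vD`. -/
noncomputable def bform (ε b c : ℝ) (u uD v vD : ℝ → ℝ) : ℝ :=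
  ε * (∫ t in (0:ℝ)..1, uD t * vD t)
    + b * (∫ t in (0:ℝ)..1, u t * vD t)
    + c * (∫ t in (0:ℝ)..1, u t * v t)

/-- `y` is a grid `0 = y₀ < y₁ < ⋯ < y_{N+1} = 1` with `N` interior nodes. -/
def IsGrid (y : ℕ → ℝ) (N : ℕ) : Prop :=
  y 0 = 0 ∧ y (N + 1) = 1 ∧ ∀ i ≤ N, y i < y (i + 1)

/-- The load `∫₀¹ f·φⱼ` for the grid `y`. -/
noncomputable def load (f : ℝ → ℝ) (y : ℕ → ℝ) (j : ℕ) : ℝ :=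
  ∫ t in (0:ℝ)..1, f t * hatFn y j t

/-- `w` (as coefficients at the interior nodes `y 1, …, y N`) is a Galerkin finite element
solution on the grid `y`: its `a`-pairing with every nodal basis hat function equals the
corresponding load. -/
def IsGalerkinSol (ε b c : ℝ) (f : ℝ → ℝ) (y : ℕ → ℝ) (N : ℕ) (w : ℕ → ℝ) : Prop :=
  ∀ j, 1 ≤ j → j ≤ N →
    (∑ i ∈ Finset.Icc 1 N,
        w i * bform ε b c (hatFn y i) (hatDeriv y i) (hatFn y j) (hatDeriv y j))
      = load f y j

/-- The stiffness matrix `A` with `A i j = a(φ_{j+1}, φ_{i+1})` (`0`-based `Fin` indices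
corresponding to the interior nodes `y 1, …, y n`). -/
noncomputable def stiff (ε b c : ℝ) (y : ℕ → ℝ) (n : ℕ) : Matrix (Fin n) (Fin n) ℝ :=
  fun i j => bform ε b c (hatFn y ((j : ℕ) + 1)) (hatDeriv y ((j : ℕ) + 1))
      (hatFn y ((i : ℕ) + 1)) (hatDeriv y ((i : ℕ) + 1))

/-- The affine function on `[α, β]` through `(α, ya)` and `(β, yb)`. -/
noncomputable def affInterp (α β ya yb t : ℝ) : ℝ :=
  ya + (yb - ya) * (t - α) / (β - α)


section Helpers

lemma measurable_hat3 (l m r : ℝ) : Measurable (hat3 l m r) := by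
  unfold hat3
  refine Measurable.ite ?_ (by fun_prop) (Measurable.ite ?_ (by fun_prop) (by fun_prop))
  · exact measurableSet_Icc (a := l) (b := m)
  · exact measurableSet_Icc (a := m) (b := r)

lemma measurable_hat3D (l m r : ℝ) : Measurable (hat3D l m r) := by
  unfold hat3D
  refine Measurable.ite ?_ (by fun_prop) (Measurable.ite ?_ (by fun_prop) (by fun_prop))
  · exact measurableSet_Ioo (a := l) (b := m)
  · exact measurableSet_Ioo (a := m) (b := r)

lemma hat3_abs_le (l m r t : ℝ) : |hat3 l m r t| ≤ 1 := by
  unfold hat3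
  split_ifs with h1 h2
  · rw [abs_div]
    apply div_le_one_of_le₀
    · calc |t - l| = t - l := abs_of_nonneg (by linarith [h1.1])
        _ ≤ m - l := by linarith [h1.2]
        _ ≤ |m - l| := le_abs_self _
    · exact abs_nonneg _
  · rw [abs_div]
    apply div_le_one_of_le₀
    · calc |r - t| = r - t := abs_of_nonneg (by linarith [h2.2])
        _ ≤ r - m := by linarith [h2.1]
        _ ≤ |r - m| := le_abs_self _
    · exact abs_nonneg _
  · simp

lemma hat3D_abs_le (l m r t : ℝ) : |hat3D l m r t| ≤ |1/(m-l)| + |1/(r-m)| := by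
  unfold hat3D
  split_ifs
  · exact le_add_of_nonneg_right (abs_nonneg _)
  · rw [abs_neg]; exact le_add_of_nonneg_left (abs_nonneg _)
  · simpa using add_nonneg (abs_nonneg (1/(m-l))) (abs_nonneg (1/(r-m)))

def HB (g : ℝ → ℝ) : Prop := Measurable g ∧ ∃ C, ∀ t, |g t| ≤ C

lemma HB_hatFn (y : ℕ → ℝ) (i : ℕ) : HB (hatFn y i) :=
  ⟨measurable_hat3 _ _ _, 1, fun t => hat3_abs_le _ _ _ t⟩

lemma HB_hatDeriv (y : ℕ → ℝ) (i : ℕ) : HB (hatDeriv y i) :=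
  ⟨measurable_hat3D _ _ _, _, hat3D_abs_le _ _ _⟩

lemma HB.ii_mul {g1 g2 : ℝ → ℝ} (h1 : HB g1) (h2 : HB g2) :
    IntervalIntegrable (fun t => g1 t * g2 t) volume (0:ℝ) 1 := by
  obtain ⟨m1, C1, b1⟩ := h1; obtain ⟨m2, C2, b2⟩ := h2
  rw [intervalIntegrable_iff]
  refine MeasureTheory.Integrable.mono' (g := fun _ => C1 * C2) ?_ ?_ ?_
  · rw [Set.uIoc_of_le (by norm_num : (0:ℝ) ≤ 1)]
    exact MeasureTheory.integrableOn_const measure_Ioc_lt_top.ne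
  · exact (m1.mul m2).aestronglyMeasurable
  · filter_upwards with t
    rw [Real.norm_eq_abs, abs_mul]
    exact mul_le_mul (b1 t) (b2 t) (abs_nonneg _) ((abs_nonneg _).trans (b1 t))

lemma ii_f_mul {f : ℝ → ℝ} (hf : ContinuousOn f (Set.Icc 0 1)) {g : ℝ → ℝ} (hg : HB g) :
    IntervalIntegrable (fun t => f t * g t) volume (0:ℝ) 1 := by
  obtain ⟨mg, C, bg⟩ := hg
  rw [intervalIntegrable_iff, Set.uIoc_of_le (by norm_num : (0:ℝ) ≤ 1)]
  have hfi : MeasureTheory.IntegrableOn f (Set.Ioc (0:ℝ) 1) volume :=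
    (hf.integrableOn_Icc).mono_set Set.Ioc_subset_Icc_self
  have h2 := hfi.bdd_mul mg.aestronglyMeasurable (MeasureTheory.ae_of_all _ fun t => by rw [Real.norm_eq_abs]; exact bg t)
  exact h2.congr (MeasureTheory.ae_of_all _ fun t => mul_comm (g t) (f t))

end Helpers

section HatLemmas
variable {l m r t : ℝ}

lemma hat3_zero_left (hlm : l < m) (ht : t ≤ l) : hat3 l m r t = 0 := by
  unfold hat3
  split_ifs with h1 h2
  · have : t = l := le_antisymm ht h1.1
    simp [this]
  · exfalso; linarith [h2.1]
  · rfl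

lemma hat3_zero_right (hmr : m < r) (ht : r ≤ t) : hat3 l m r t = 0 := by
  unfold hat3
  split_ifs with h1 h2
  · exfalso; linarith [h1.2]
  · have : t = r := le_antisymm h2.2 ht
    simp [this]
  · rfl

lemma hat3D_zero_left (hlm : l ≤ m) (ht : t ≤ l) : hat3D l m r t = 0 := by
  unfold hat3D
  split_ifs with h1 h2
  · exfalso; linarith [h1.1]
  · exfalso; linarith [h2.1]
  · rfl

lemma hat3D_zero_right (hmr : m ≤ r) (ht : r ≤ t) : hat3D l m r t = 0 := by
  unfold hat3D
  split_ifs with h1 h2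
  · exfalso; linarith [h1.2]
  · exfalso; linarith [h2.2]
  · rfl

lemma hat3D_zero_mid : hat3D l m r m = 0 := by
  unfold hat3D
  split_ifs with h1 h2
  · exact absurd h1.2 (lt_irrefl m)
  · exact absurd h2.1 (lt_irrefl m)
  · rfl

lemma hat3_eval1 (h : l ≤ t) (h' : t ≤ m) : hat3 l m r t = (t - l)/(m - l) := by
  unfold hat3; rw [if_pos ⟨h, h'⟩]

lemma hat3_eval2 (hlm : l ≤ m) (h : m < t) (h' : t ≤ r) : hat3 l m r t = (r - t)/(r - m) := by
  unfold hat3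
  rw [if_neg (by rintro ⟨_, h2⟩; linarith), if_pos ⟨h.le, h'⟩]

lemma hat3D_eval1 (h : l < t) (h' : t < m) : hat3D l m r t = 1/(m - l) := by
  unfold hat3D; rw [if_pos ⟨h, h'⟩]

lemma hat3D_eval2 (hlm : l ≤ m) (h : m < t) (h' : t < r) : hat3D l m r t = -(1/(r - m)) := by
  unfold hat3D
  rw [if_neg (by rintro ⟨_, h2⟩; linarith), if_pos ⟨h, h'⟩]

lemma hat3_split {a b s : ℝ} (h1 : a < b) (h2 : b < s) (h3 : s < 1) (t : ℝ) :
    hat3 a b 1 t = hat3 a b s t + (1 - s)/(1 - b) * hat3 b s 1 t := by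
  rcases le_or_gt t a with ht | ht
  · rw [hat3_zero_left h1 ht, hat3_zero_left h1 ht, hat3_zero_left h2 (ht.trans h1.le)]
    ring
  rcases le_or_gt t b with ht2 | ht2
  · rw [hat3_eval1 ht.le ht2, hat3_eval1 ht.le ht2, hat3_zero_left h2 ht2]
    ring
  rcases le_or_gt t s with ht3 | ht3
  · rw [hat3_eval2 h1.le ht2 (by linarith), hat3_eval2 h1.le ht2 ht3,
      hat3_eval1 ht2.le ht3]
    have e1 : (1:ℝ) - b ≠ 0 := by linarith
    have e2 : s - b ≠ 0 := by linarith
    field_simp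
    ring
  rcases le_or_gt t 1 with ht4 | ht4
  · rw [hat3_eval2 h1.le ht2 ht4, hat3_zero_right h2 ht3.le,
      hat3_eval2 h2.le ht3 ht4]
    have e1 : (1:ℝ) - b ≠ 0 := by linarith
    have e3 : (1:ℝ) - s ≠ 0 := by linarith
    field_simp
    ring
  · rw [hat3_zero_right (by linarith : b < 1) ht4.le, hat3_zero_right h2 (by linarith),
      hat3_zero_right h3 ht4.le]
    ring

lemma hat3D_split {a b s : ℝ} (h1 : a < b) (h2 : b < s) (h3 : s < 1) (t : ℝ) (hts : t ≠ s) :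
    hat3D a b 1 t = hat3D a b s t + (1 - s)/(1 - b) * hat3D b s 1 t := by
  rcases le_or_gt t a with ht | ht
  · rw [hat3D_zero_left h1.le ht, hat3D_zero_left h1.le ht,
      hat3D_zero_left h2.le (ht.trans h1.le)]
    ring
  rcases lt_trichotomy t b with ht2 | ht2 | ht2
  · rw [hat3D_eval1 ht ht2, hat3D_eval1 ht ht2, hat3D_zero_left h2.le ht2.le]
    ring
  · subst ht2
    rw [hat3D_zero_mid, hat3D_zero_mid, hat3D_zero_left h2.le le_rfl]
    ring
  rcases lt_trichotomy t s with ht3 | ht3 | ht3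
  · rw [hat3D_eval2 h1.le ht2 (by linarith), hat3D_eval2 h1.le ht2 ht3,
      hat3D_eval1 ht2 ht3]
    have e1 : (1:ℝ) - b ≠ 0 := by linarith
    have e2 : s - b ≠ 0 := by linarith
    field_simp
    ring
  · exact absurd ht3 hts
  rcases lt_or_ge t 1 with ht4 | ht4
  · rw [hat3D_eval2 h1.le ht2 ht4, hat3D_zero_right h2.le ht3.le,
      hat3D_eval2 h2.le ht3 ht4]
    have e1 : (1:ℝ) - b ≠ 0 := by linarith
    have e3 : (1:ℝ) - s ≠ 0 := by linarith
    field_simp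
    ring
  · rw [hat3D_zero_right (by linarith : b ≤ 1) ht4, hat3D_zero_right h2.le (by linarith),
      hat3D_zero_right h3.le ht4]
    ring

end HatLemmas

section BformLemmas

lemma integral_decomp {p s : ℝ} {g g1 g2 h : ℝ → ℝ}
    (hg : ∀ t, t ≠ s → g t = g1 t + p * g2 t)
    (i1 : IntervalIntegrable (fun t => g1 t * h t) volume (0:ℝ) 1)
    (i2 : IntervalIntegrable (fun t => g2 t * h t) volume (0:ℝ) 1) :
    (∫ t in (0:ℝ)..1, g t * h t)
      = (∫ t in (0:ℝ)..1, g1 t * h t) + p * ∫ t in (0:ℝ)..1, g2 t * h t := by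
  have hae : ∀ᵐ (t : ℝ), t ≠ s := by
    have hset : ({s} : Set ℝ) = {u | ¬ u ≠ s} := by ext u; simp
    rw [MeasureTheory.ae_iff, ← hset]
    exact MeasureTheory.measure_singleton s
  rw [intervalIntegral.integral_congr_ae
      (g := fun t => g1 t * h t + p * (g2 t * h t)) ?_]
  · rw [intervalIntegral.integral_add i1 (i2.const_mul p),
      intervalIntegral.integral_const_mul]
  · filter_upwards [hae] with t ht _
    rw [hg t ht]; ring

lemma integral_decomp' {p s : ℝ} {g g1 g2 h : ℝ → ℝ}
    (hg : ∀ t, t ≠ s → g t = g1 t + p * g2 t)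
    (i1 : IntervalIntegrable (fun t => h t * g1 t) volume (0:ℝ) 1)
    (i2 : IntervalIntegrable (fun t => h t * g2 t) volume (0:ℝ) 1) :
    (∫ t in (0:ℝ)..1, h t * g t)
      = (∫ t in (0:ℝ)..1, h t * g1 t) + p * ∫ t in (0:ℝ)..1, h t * g2 t := by
  have hae : ∀ᵐ (t : ℝ), t ≠ s := by
    have hset : ({s} : Set ℝ) = {u | ¬ u ≠ s} := by ext u; simp
    rw [MeasureTheory.ae_iff, ← hset]
    exact MeasureTheory.measure_singleton s
  rw [intervalIntegral.integral_congr_ae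
      (g := fun t => h t * g1 t + p * (h t * g2 t)) ?_]
  · rw [intervalIntegral.integral_add i1 (i2.const_mul p),
      intervalIntegral.integral_const_mul]
  · filter_upwards [hae] with t ht _
    rw [hg t ht]; ring

lemma bform_decomp_left (ε b c : ℝ) {p s : ℝ} {u uD u1 uD1 u2 uD2 v vD : ℝ → ℝ}
    (hu : ∀ t, u t = u1 t + p * u2 t)
    (huD : ∀ t, t ≠ s → uD t = uD1 t + p * uD2 t)
    (h1 : HB u1) (h1D : HB uD1) (h2 : HB u2) (h2D : HB uD2) (hv : HB v) (hvD : HB vD) :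
    bform ε b c u uD v vD = bform ε b c u1 uD1 v vD + p * bform ε b c u2 uD2 v vD := by
  unfold bform
  rw [integral_decomp (s := s) huD (h1D.ii_mul hvD) (h2D.ii_mul hvD),
    integral_decomp (s := s) (fun t _ => hu t) (h1.ii_mul hvD) (h2.ii_mul hvD),
    integral_decomp (s := s) (fun t _ => hu t) (h1.ii_mul hv) (h2.ii_mul hv)]
  ring

lemma bform_decomp_right (ε b c : ℝ) {p s : ℝ} {u uD v vD v1 vD1 v2 vD2 : ℝ → ℝ}
    (hv : ∀ t, v t = v1 t + p * v2 t)
    (hvD : ∀ t, t ≠ s → vD t = vD1 t + p * vD2 t)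
    (h1 : HB v1) (h1D : HB vD1) (h2 : HB v2) (h2D : HB vD2) (hu : HB u) (huD : HB uD) :
    bform ε b c u uD v vD = bform ε b c u uD v1 vD1 + p * bform ε b c u uD v2 vD2 := by
  unfold bform
  rw [integral_decomp' (s := s) hvD (huD.ii_mul h1D) (huD.ii_mul h2D),
    integral_decomp' (s := s) hvD (hu.ii_mul h1D) (hu.ii_mul h2D),
    integral_decomp' (s := s) (fun t _ => hv t) (hu.ii_mul h1) (hu.ii_mul h2)]
  ring

lemma bform_zero (ε b c : ℝ) {u uD v vD : ℝ → ℝ}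
    (h1 : ∀ t, uD t * vD t = 0) (h2 : ∀ t, u t * vD t = 0) (h3 : ∀ t, u t * v t = 0) :
    bform ε b c u uD v vD = 0 := by
  unfold bform
  simp only [h1, h2, h3, intervalIntegral.integral_zero, mul_zero, add_zero]

lemma load_decomp {f : ℝ → ℝ} (hf : ContinuousOn f (Set.Icc 0 1)) {p : ℝ}
    {g g1 g2 : ℝ → ℝ} (hg : ∀ t, g t = g1 t + p * g2 t)
    (h1 : HB g1) (h2 : HB g2) :
    (∫ t in (0:ℝ)..1, f t * g t)
      = (∫ t in (0:ℝ)..1, f t * g1 t) + p * ∫ t in (0:ℝ)..1, f t * g2 t :=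
  integral_decomp' (s := 0) (fun t _ => hg t) (ii_f_mul hf h1) (ii_f_mul hf h2)

end BformLemmas

/-- Theorem 3.1, algebraic form: if `Uⁿ` solves `A·Uⁿ = F` on the original grid
`x` and `(u₁, …, uₙ, u_{s₁})` solves the refined Galerkin system on the grid `y` obtained from
`x` by inserting one point `s₁ = y (n+1) ∈ (xₙ, 1)`, then
`Uⁿ − (u₁, …, uₙ) = C·A⁻¹eₙ` with `p = (1 − s₁)/(1 − xₙ)` and
`C = (u_{s₁} − p·uₙ)·a(φ_{s₁}, φₙ)`. -/
theorem statement6 (n : ℕ) (hn : 1 ≤ n) (x y : ℕ → ℝ) (ε b c : ℝ) (f : ℝ → ℝ)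
    (hf : ContinuousOn f (Set.Icc 0 1))
    (hx : IsGrid x n) (hy : IsGrid y (n + 1))
    (hagree : ∀ i ≤ n, y i = x i)
    (A : Matrix (Fin n) (Fin n) ℝ) (hA : A = stiff ε b c x n) (hAdet : A.det ≠ 0)
    (Un : ℕ → ℝ)
    (hUn : A *ᵥ (fun j : Fin n => Un ((j : ℕ) + 1))
      = fun j : Fin n => load f x ((j : ℕ) + 1))
    (w : ℕ → ℝ) (hw : IsGalerkinSol ε b c f y (n + 1) w) :
    (fun j : Fin n => Un ((j : ℕ) + 1) - w ((j : ℕ) + 1))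
      = ((w (n + 1) - (1 - y (n + 1)) / (1 - x n) * w n)
            * bform ε b c (hatFn y (n + 1)) (hatDeriv y (n + 1)) (hatFn x n) (hatDeriv x n))
          • (A⁻¹ *ᵥ (fun j : Fin n => if (j : ℕ) = n - 1 then 1 else 0)) := by
  obtain ⟨hx0, hx1, hxlt⟩ := hx
  obtain ⟨hy0, hy1, hylt⟩ := hy
  set P := (1 - y (n + 1)) / (1 - x n) with hP
  set K := bform ε b c (hatFn y (n + 1)) (hatDeriv y (n + 1)) (hatFn x n) (hatDeriv x n)
    with hKdef
  set C := (w (n + 1) - P * w n) * K with hCdef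
  have hyn : y n = x n := hagree n le_rfl
  have hyn1 : y (n - 1) = x (n - 1) := hagree _ (by omega)
  have hab : x (n - 1) < x n := by
    have h := hxlt (n - 1) (by omega)
    rwa [show n - 1 + 1 = n by omega] at h
  have hbs : x n < y (n + 1) := by
    have h := hylt n (by omega); rwa [hyn] at h
  have hs1 : y (n + 1) < 1 := by
    have h := hylt (n + 1) le_rfl; rwa [hy1] at h
  have ymono : ∀ k : ℕ, k ≤ n + 2 → ∀ i : ℕ, i ≤ k → y i ≤ y k := by
    intro k
    induction k with
    | zero => intro _ i hi
              have : i = 0 := by omega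
              rw [this]
    | succ k ih =>
      intro hk i hi
      rcases eq_or_lt_of_le hi with h | h
      · rw [h]
      · exact (ih (by omega) i (by omega)).trans (hylt k (by omega)).le
  -- normal forms of the relevant hat functions
  have hXn : hatFn x n = hat3 (x (n - 1)) (x n) 1 := by unfold hatFn; rw [hx1]
  have hXnD : hatDeriv x n = hat3D (x (n - 1)) (x n) 1 := by unfold hatDeriv; rw [hx1]
  have hYn : hatFn y n = hat3 (x (n - 1)) (x n) (y (n + 1)) := by unfold hatFn; rw [hyn1, hyn]
  have hYnD : hatDeriv y n = hat3D (x (n - 1)) (x n) (y (n + 1)) := by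
    unfold hatDeriv; rw [hyn1, hyn]
  have hYs : hatFn y (n + 1) = hat3 (x n) (y (n + 1)) 1 := by
    unfold hatFn; rw [Nat.add_sub_cancel, hyn, hy1]
  have hYsD : hatDeriv y (n + 1) = hat3D (x n) (y (n + 1)) 1 := by
    unfold hatDeriv; rw [Nat.add_sub_cancel, hyn, hy1]
  -- decomposition of the coarse-grid hat at node n
  have hFsplit : ∀ t, hatFn x n t = hatFn y n t + P * hatFn y (n + 1) t := by
    intro t; rw [hXn, hYn, hYs]; exact hat3_split hab hbs hs1 t
  have hDsplit : ∀ t, t ≠ y (n + 1) →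
      hatDeriv x n t = hatDeriv y n t + P * hatDeriv y (n + 1) t := by
    intro t ht; rw [hXnD, hYnD, hYsD]; exact hat3D_split hab hbs hs1 t ht
  -- agreement of hats at nodes below n
  have hag : ∀ i, i + 1 ≤ n → hatFn y i = hatFn x i := by
    intro i hi; unfold hatFn
    rw [hagree (i - 1) (by omega), hagree i (by omega), hagree (i + 1) hi]
  have hagD : ∀ i, i + 1 ≤ n → hatDeriv y i = hatDeriv x i := by
    intro i hi; unfold hatDeriv
    rw [hagree (i - 1) (by omega), hagree i (by omega), hagree (i + 1) hi]
  -- orthogonality of the new hat against hats below n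
  have horth : ∀ j, j + 1 ≤ n →
      bform ε b c (hatFn y (n + 1)) (hatDeriv y (n + 1)) (hatFn y j) (hatDeriv y j) = 0 := by
    intro j hj
    have hyj : y j < y (j + 1) := hylt j (by omega)
    have hyjn : y (j + 1) ≤ y n := ymono n (by omega) (j + 1) hj
    have hz1 : ∀ t, t ≤ x n → hatFn y (n + 1) t = 0 ∧ hatDeriv y (n + 1) t = 0 := by
      intro t ht
      rw [hYs, hYsD]
      exact ⟨hat3_zero_left hbs ht, hat3D_zero_left hbs.le ht⟩
    have hz2 : ∀ t, x n < t → hatFn y j t = 0 ∧ hatDeriv y j t = 0 := by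
      intro t ht
      have hjt : y (j + 1) ≤ t := hyjn.trans (hyn.le.trans ht.le)
      exact ⟨hat3_zero_right hyj hjt, hat3D_zero_right hyj.le hjt⟩
    apply bform_zero
    · intro t
      rcases le_or_gt t (x n) with ht | ht
      · rw [(hz1 t ht).2, zero_mul]
      · rw [(hz2 t ht).2, mul_zero]
    · intro t
      rcases le_or_gt t (x n) with ht | ht
      · rw [(hz1 t ht).1, zero_mul]
      · rw [(hz2 t ht).2, mul_zero]
    · intro t
      rcases le_or_gt t (x n) with ht | ht
      · rw [(hz1 t ht).1, zero_mul]
      · rw [(hz2 t ht).1, mul_zero]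
  -- partial Galerkin sums on the fine grid
  have hsum : ∀ j, 1 ≤ j → j ≤ n + 1 →
      (∑ i ∈ Finset.Icc 1 n,
          w i * bform ε b c (hatFn y i) (hatDeriv y i) (hatFn y j) (hatDeriv y j))
        = load f y j - w (n + 1) *
            bform ε b c (hatFn y (n + 1)) (hatDeriv y (n + 1)) (hatFn y j) (hatDeriv y j) := by
    intro j h1 h2
    have h := hw j h1 h2
    rw [Finset.sum_Icc_succ_top (by omega : 1 ≤ n + 1)] at h
    linarith
  -- splitting of K
  have hKsplit : K =
      bform ε b c (hatFn y (n + 1)) (hatDeriv y (n + 1)) (hatFn y n) (hatDeriv y n)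
        + P * bform ε b c (hatFn y (n + 1)) (hatDeriv y (n + 1))
            (hatFn y (n + 1)) (hatDeriv y (n + 1)) := by
    rw [hKdef]
    exact bform_decomp_right ε b c hFsplit hDsplit (HB_hatFn y n) (HB_hatDeriv y n)
      (HB_hatFn y (n + 1)) (HB_hatDeriv y (n + 1)) (HB_hatFn y (n + 1)) (HB_hatDeriv y (n + 1))
  have hloadsplit : load f x n = load f y n + P * load f y (n + 1) := by
    unfold load
    exact load_decomp hf hFsplit (HB_hatFn y n) (HB_hatFn y (n + 1))
  -- the key identity
  have hkey : ∀ j, 1 ≤ j → j ≤ n →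
      (∑ i ∈ Finset.Icc 1 n,
          w i * bform ε b c (hatFn x i) (hatDeriv x i) (hatFn x j) (hatDeriv x j))
        = load f x j - (if j = n then C else 0) := by
    intro j hj1 hj2
    rcases Nat.lt_or_ge j n with hjn | hjn
    · -- case j < n
      have hjn' : j + 1 ≤ n := hjn
      rw [if_neg (by omega), sub_zero]
      have e1 : ∀ i ∈ Finset.Icc 1 n,
          w i * bform ε b c (hatFn x i) (hatDeriv x i) (hatFn x j) (hatDeriv x j)
            = w i * bform ε b c (hatFn y i) (hatDeriv y i) (hatFn y j) (hatDeriv y j) := by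
        intro i hi
        simp only [Finset.mem_Icc] at hi
        rcases Nat.lt_or_ge i n with h | h
        · rw [← hag i h, ← hagD i h, ← hag j hjn', ← hagD j hjn']
        · have h' : i = n := by omega
          rw [h', ← hag j hjn', ← hagD j hjn',
            bform_decomp_left ε b c hFsplit hDsplit (HB_hatFn y n) (HB_hatDeriv y n)
              (HB_hatFn y (n + 1)) (HB_hatDeriv y (n + 1)) (HB_hatFn y j) (HB_hatDeriv y j),
            horth j hjn']
          ring
      rw [Finset.sum_congr rfl e1, hsum j hj1 (by omega), horth j hjn']
      have : load f y j = load f x j := by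
        unfold load; rw [hag j hjn']
      rw [this]; ring
    · -- case j = n
      have h' : j = n := by omega
      rw [h', if_pos rfl]
      have e2 : ∀ i ∈ Finset.Icc 1 n,
          w i * bform ε b c (hatFn x i) (hatDeriv x i) (hatFn x n) (hatDeriv x n)
            = w i * bform ε b c (hatFn y i) (hatDeriv y i) (hatFn y n) (hatDeriv y n)
              + P * (w i * bform ε b c (hatFn y i) (hatDeriv y i)
                  (hatFn y (n + 1)) (hatDeriv y (n + 1)))
              + (if i = n then P * w n * K else 0) := by
        intro i hi
        simp only [Finset.mem_Icc] at hi
        rcases Nat.lt_or_ge i n with h | h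
        · rw [if_neg (by omega), ← hag i h, ← hagD i h,
            bform_decomp_right ε b c hFsplit hDsplit (HB_hatFn y n) (HB_hatDeriv y n)
              (HB_hatFn y (n + 1)) (HB_hatDeriv y (n + 1)) (HB_hatFn y i) (HB_hatDeriv y i)]
          ring
        · have h2 : i = n := by omega
          rw [h2, if_pos rfl,
            bform_decomp_left ε b c hFsplit hDsplit (HB_hatFn y n) (HB_hatDeriv y n)
              (HB_hatFn y (n + 1)) (HB_hatDeriv y (n + 1)) (HB_hatFn x n) (HB_hatDeriv x n),
            bform_decomp_right ε b c hFsplit hDsplit (HB_hatFn y n) (HB_hatDeriv y n)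
              (HB_hatFn y (n + 1)) (HB_hatDeriv y (n + 1)) (HB_hatFn y n) (HB_hatDeriv y n),
            ← hKdef]
          ring
      rw [Finset.sum_congr rfl e2]
      rw [Finset.sum_add_distrib, Finset.sum_add_distrib, ← Finset.mul_sum,
        Finset.sum_ite_eq' (Finset.Icc 1 n) n, if_pos (Finset.mem_Icc.mpr ⟨hn, le_rfl⟩),
        hsum n (by omega) (by omega), hsum (n + 1) (by omega) (by omega)]
      rw [hloadsplit, hCdef]
      linear_combination (w (n + 1)) * hKsplit
  -- assemble
  have hAunit : IsUnit A.det := isUnit_iff_ne_zero.mpr hAdet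
  have hmain : A *ᵥ (fun j : Fin n => Un ((j : ℕ) + 1) - w ((j : ℕ) + 1))
      = (fun j : Fin n => if (j : ℕ) = n - 1 then C else 0) := by
    funext j
    have hjlt := j.isLt
    have hUnj := congrFun hUn j
    simp only [Matrix.mulVec, dotProduct] at hUnj ⊢
    have hwj : (∑ i : Fin n, A j i * w ((i : ℕ) + 1))
        = load f x ((j : ℕ) + 1) - (if (j : ℕ) + 1 = n then C else 0) := by
      have hk := hkey ((j : ℕ) + 1) (by omega) (by omega)
      rw [← hk, ← Finset.Ico_add_one_right_eq_Icc, Finset.sum_Ico_eq_sum_range]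
      rw [show n + 1 - 1 = n from rfl]
      rw [← Fin.sum_univ_eq_sum_range (fun i => w (1 + i) * bform ε b c (hatFn x (1 + i))
        (hatDeriv x (1 + i)) (hatFn x ((j : ℕ) + 1)) (hatDeriv x ((j : ℕ) + 1))) n]
      apply Finset.sum_congr rfl
      intro i _
      rw [hA]
      simp only [stiff]
      rw [Nat.add_comm 1 (i : ℕ)]
      ring
    calc (∑ i : Fin n, A j i * (Un ((i : ℕ) + 1) - w ((i : ℕ) + 1)))
        = (∑ i : Fin n, A j i * Un ((i : ℕ) + 1))
            - ∑ i : Fin n, A j i * w ((i : ℕ) + 1) := by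
          rw [← Finset.sum_sub_distrib]
          exact Finset.sum_congr rfl fun i _ => by ring
      _ = (if (j : ℕ) + 1 = n then C else 0) := by rw [hUnj, hwj]; ring
      _ = (if (j : ℕ) = n - 1 then C else 0) := by
          by_cases h : (j : ℕ) + 1 = n
          · rw [if_pos h, if_pos (by omega : (j : ℕ) = n - 1)]
          · rw [if_neg h, if_neg (by omega : ¬ (j : ℕ) = n - 1)]
  have hfin : (fun j : Fin n => Un ((j : ℕ) + 1) - w ((j : ℕ) + 1))
      = A⁻¹ *ᵥ (A *ᵥ (fun j : Fin n => Un ((j : ℕ) + 1) - w ((j : ℕ) + 1))) := by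
    rw [Matrix.mulVec_mulVec, Matrix.nonsing_inv_mul A hAunit, Matrix.one_mulVec]
  rw [hfin, hmain,
    show (fun j : Fin n => if (j : ℕ) = n - 1 then C else 0)
        = C • (fun j : Fin n => if (j : ℕ) = n - 1 then (1 : ℝ) else 0) from
      funext fun j => by simp [Pi.smul_apply, smul_eq_mul, mul_ite],
    Matrix.mulVec_smul]
end

section
/- (Corollary 3.1.) Let 0 = x₀ < ⋯ < x_{n+1} = 1 be a grid, ε, b, c reals, f : [0,1] → ℝ continuous, A = (a(φⱼ, φᵢ))_{1≤i,j≤n} invertible, and Uⁿ ∈ ℝⁿ the solution of A·Uⁿ = F with Fⱼ = ∫₀¹ f·φⱼ. Let 0 < s₁ < ⋯ < s_m < x₁ and let (u_{s₁}, …, u_{s_m}, u₁, …, uₙ) solve the refined Galerkin system whose nodal basis consists of the hats at s₁, …, s_m, the hat φ̃₁ at x₁ on the refined grid (support [s_m, x₂]), and φ₂, …, φₙ. Then there is a scalar C such that Uⁿ − (u₁, …, uₙ) = C·A⁻¹e₁, where e₁ = (1, 0, …, 0)ᵗ. Consequently, for each 2 ≤ i ≤ n with a sign change of the nodal differences at x_{i−1}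 and xᵢ, the intersection point of the two piecewise linear solutions in (x_{i−1}, xᵢ) is independent of m and of the distribution of the added points. -/
open Matrix MeasureTheory

section Aux

lemma aux_hat3_zero_left {l m r t : ℝ} (h : t ≤ l) (hlm : l < m) : hat3 l m r t = 0 := by
  unfold hat3
  rcases le_or_gt l t with h1 | h1
  · have : t = l := le_antisymm h h1
    subst this
    rw [if_pos ⟨le_refl _, le_of_lt hlm⟩]; simp
  · rw [if_neg (by intro hc; linarith [hc.1]), if_neg (by intro hc; linarith [hc.1])]

lemma aux_hat3D_zero_left {l m r t : ℝ} (h : t ≤ l) (hlm : l < m) : hat3D l m r t = 0 := by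
  unfold hat3D
  rw [if_neg (by intro hc; linarith [hc.1]), if_neg (by intro hc; linarith [hc.1])]

lemma aux_hat3_zero_right {l m r t : ℝ} (h : r ≤ t) (hmr : m < r) : hat3 l m r t = 0 := by
  unfold hat3
  rw [if_neg (by intro hc; linarith [hc.2])]
  rcases le_or_gt t r with h1 | h1
  · have : t = r := le_antisymm h1 h
    subst this; split <;> simp
  · rw [if_neg (by intro hc; linarith [hc.2])]

lemma aux_hat3D_zero_right {l m r t : ℝ} (h : r ≤ t) (hmr : m < r) : hat3D l m r t = 0 := by
  unfold hat3D
  rw [if_neg (by intro hc; linarith [hc.2]), if_neg (by intro hc; linarith [hc.2])]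

lemma aux_hat3_congr_left {l l' m r t : ℝ} (h : m < t) : hat3 l m r t = hat3 l' m r t := by
  unfold hat3
  rw [if_neg (fun hc => absurd hc.2 (not_le.mpr h)),
    if_neg (fun hc : l' ≤ t ∧ t ≤ m => absurd hc.2 (not_le.mpr h))]

lemma aux_hat3D_congr_left {l l' m r t : ℝ} (h : m < t) : hat3D l m r t = hat3D l' m r t := by
  unfold hat3D
  rw [if_neg (fun hc => absurd hc.2 (not_lt.mpr h.le)),
    if_neg (fun hc : l' < t ∧ t < m => absurd hc.2 (not_lt.mpr h.le))]

lemma aux_grid_le {y : ℕ → ℝ} {N : ℕ} (h : IsGrid y N) {i j : ℕ} (hij : i ≤ j) (hj : j ≤ N + 1) :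
    y i ≤ y j := by
  induction j with
  | zero => have : i = 0 := by omega
            simp [this]
  | succ k ih =>
    rcases Nat.lt_or_ge i (k + 1) with h1 | h2
    · exact le_trans (ih (by omega) (by omega)) (le_of_lt (h.2.2 k (by omega)))
    · have : i = k + 1 := by omega
      simp [this]

lemma aux_bform_congr {ε b c : ℝ} {u uD v vD u' uD' v' vD' : ℝ → ℝ}
    (h1 : ∀ t, uD t * vD t = uD' t * vD' t)
    (h2 : ∀ t, u t * vD t = u' t * vD' t)
    (h3 : ∀ t, u t * v t = u' t * v' t) :
    bform ε b c u uD v vD = bform ε b c u' uD' v' vD' := by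
  unfold bform
  simp only [h1, h2, h3]

lemma aux_bform_zero {ε b c : ℝ} {u uD v vD : ℝ → ℝ}
    (h1 : ∀ t, uD t * vD t = 0) (h2 : ∀ t, u t * vD t = 0) (h3 : ∀ t, u t * v t = 0) :
    bform ε b c u uD v vD = 0 := by
  unfold bform
  simp only [h1, h2, h3, intervalIntegral.integral_zero, mul_zero, add_zero]

lemma aux_sum_shift (m n : ℕ) (F : ℕ → ℝ) :
    ∑ i ∈ Finset.Icc (m + 1) (m + n), F i = ∑ k ∈ Finset.Icc 1 n, F (m + k) := by
  apply Finset.sum_nbij' (fun i => i - m) (fun k => m + k)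
  · intro a ha; simp only [Finset.mem_Icc] at *; omega
  · intro a ha; simp only [Finset.mem_Icc] at *; omega
  · intro a ha; simp only [Finset.mem_Icc] at ha; omega
  · intro a ha; simp only [Finset.mem_Icc] at ha; omega
  · intro a ha; simp only [Finset.mem_Icc] at ha
    congr 1; omega

lemma aux_sum_Icc_split (m n : ℕ) (F : ℕ → ℝ) :
    ∑ i ∈ Finset.Icc 1 (m + n), F i
      = (∑ i ∈ Finset.Icc 1 m, F i) + ∑ i ∈ Finset.Icc (m + 1) (m + n), F i := by
  rw [(show Finset.Icc 1 (m + n) = Finset.Ioc 0 (m + n) from Finset.Icc_add_one_left_eq_Ioc (a := 0) (b := m + n)),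
    Finset.Icc_add_one_left_eq_Ioc,
    ← Finset.sum_Ioc_consecutive _ (Nat.zero_le m) (Nat.le_add_right m n)]
  congr 1

lemma aux_sum_Icc_fin (n : ℕ) (F : ℕ → ℝ) :
    ∑ k ∈ Finset.Icc 1 n, F k = ∑ j : Fin n, F ((j : ℕ) + 1) := by
  conv_rhs => rw [Fin.sum_univ_eq_sum_range (fun j => F (j + 1)) n]
  apply Finset.sum_nbij' (fun i => i - 1) (fun k => k + 1)
  · intro a ha; simp only [Finset.mem_Icc, Finset.mem_range] at *; omega
  · intro a ha; simp only [Finset.mem_Icc, Finset.mem_range] at *; omega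
  · intro a ha; simp only [Finset.mem_Icc] at ha; omega
  · intro a ha; omega
  · intro a ha; simp only [Finset.mem_Icc] at ha
    congr 1; omega

lemma aux_cross_pt_mem {α β p q : ℝ} (hαβ : α < β) (hpq : p * q < 0) :
    α + p * (β - α) / (p - q) ∈ Set.Ioo α β := by
  have hβα : (0:ℝ) < β - α := by linarith
  have hs : 0 < p / (p - q) ∧ p / (p - q) < 1 := by
    rcases mul_neg_iff.mp hpq with ⟨hp, hq⟩ | ⟨hp, hq⟩
    · have hd : 0 < p - q := by linarith
      exact ⟨div_pos hp hd, (div_lt_one hd).mpr (by linarith)⟩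
    · have hd : p - q < 0 := by linarith
      have : p / (p - q) = (-p) / (-(p - q)) := by rw [neg_div_neg_eq]
      rw [this]
      constructor
      · exact div_pos (by linarith) (by linarith)
      · exact (div_lt_one (by linarith)).mpr (by linarith)
  have he : p * (β - α) / (p - q) = (p / (p - q)) * (β - α) := by ring
  rw [he]
  constructor
  · nlinarith [hs.1]
  · nlinarith [hs.2]

lemma aux_cross_iff {α β p q K : ℝ} (ya yb : ℝ) (hαβ : α < β) (hpq : p * q < 0) (hK : K ≠ 0)
    (t' : ℝ) :
    (affInterp α β ya yb t' = affInterp α β (ya - K * p) (yb - K * q) t'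
      ↔ t' = α + p * (β - α) / (p - q)) := by
  have hβα : β - α ≠ 0 := by intro h; linarith [h]
  have hβα' : (0:ℝ) < β - α := by linarith
  have hpq' : p - q ≠ 0 := by
    intro h
    have hq : p = q := by linarith
    rw [hq] at hpq
    nlinarith [mul_self_nonneg q]
  unfold affInterp
  constructor
  · intro h
    have h3 : K * ((p - q) * (t' - α) - p * (β - α)) = 0 := by
      field_simp at h
      linear_combination -h
    rcases mul_eq_zero.mp h3 with h4 | h4
    · exact absurd h4 hK
    · field_simp
      linear_combination h4
  · intro h
    subst h
    field_simp
    ring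

lemma aux_hatFn_shift {m n : ℕ} {x y : ℕ → ℝ}
    (hagree : ∀ i, 1 ≤ i → i ≤ n + 1 → y (m + i) = x i) {k : ℕ} (hk2 : 2 ≤ k) (hkn : k ≤ n) :
    hatFn y (m + k) = hatFn x k ∧ hatDeriv y (m + k) = hatDeriv x k := by
  unfold hatFn hatDeriv
  have e1 : m + k - 1 = m + (k - 1) := by omega
  have e2 : m + k + 1 = m + (k + 1) := by omega
  rw [e1, e2, hagree (k - 1) (by omega) (by omega), hagree k (by omega) (by omega),
    hagree (k + 1) (by omega) (by omega)]
  exact ⟨rfl, rfl⟩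

lemma aux_transfer (n m : ℕ) (hn : 1 ≤ n) (hm : 1 ≤ m) (x y : ℕ → ℝ) (ε b c : ℝ) (f : ℝ → ℝ)
    (hx : IsGrid x n) (hy : IsGrid y (m + n))
    (hagree : ∀ i, 1 ≤ i → i ≤ n + 1 → y (m + i) = x i)
    (w : ℕ → ℝ) (hw : IsGalerkinSol ε b c f y (m + n) w) :
    ∀ j, 2 ≤ j → j ≤ n →
      ∑ k ∈ Finset.Icc 1 n,
          w (m + k) * bform ε b c (hatFn x k) (hatDeriv x k) (hatFn x j) (hatDeriv x j)
        = load f x j := by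
  intro j hj2 hjn
  obtain ⟨hxfn, hxD⟩ := aux_hatFn_shift hagree hj2 hjn
  have hmain := hw (m + j) (by omega) (by omega)
  rw [hxfn, hxD] at hmain
  have hload : load f y (m + j) = load f x j := by unfold load; rw [hxfn]
  rw [hload] at hmain
  rw [aux_sum_Icc_split m n, aux_sum_shift m n] at hmain
  have hxj1 : x 1 ≤ x (j - 1) := aux_grid_le hx (by omega) (by omega)
  have hxjlt : x (j - 1) < x j := by
    have := hx.2.2 (j - 1) (by omega)
    rwa [show j - 1 + 1 = j by omega] at this
  have hym1 : y (m + 1) = x 1 := hagree 1 le_rfl (by omega)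
  have hz : ∑ i ∈ Finset.Icc 1 m,
      w i * bform ε b c (hatFn y i) (hatDeriv y i) (hatFn x j) (hatDeriv x j) = 0 := by
    apply Finset.sum_eq_zero
    intro i hi
    rw [Finset.mem_Icc] at hi
    have key : ∀ t : ℝ, (hatFn y i t = 0 ∧ hatDeriv y i t = 0)
        ∨ (hatFn x j t = 0 ∧ hatDeriv x j t = 0) := by
      intro t
      rcases lt_or_ge t (x 1) with ht | ht
      · exact Or.inr ⟨aux_hat3_zero_left (by linarith) hxjlt,
          aux_hat3D_zero_left (by linarith) hxjlt⟩
      · left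
        have h1 : y (i + 1) ≤ y (m + 1) := aux_grid_le hy (by omega) (by omega)
        have h2 : y i < y (i + 1) := hy.2.2 i (by omega)
        have h3 : y (i + 1) ≤ t := by rw [hym1] at h1; linarith
        exact ⟨aux_hat3_zero_right h3 h2, aux_hat3D_zero_right h3 h2⟩
    rw [aux_bform_zero (fun t => by rcases key t with h | h
                                    · rw [h.2, zero_mul]
                                    · rw [h.2, mul_zero])
        (fun t => by rcases key t with h | h
                     · rw [h.1, zero_mul]
                     · rw [h.2, mul_zero])
        (fun t => by rcases key t with h | h
                     · rw [h.1, zero_mul]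
                     · rw [h.1, mul_zero]), mul_zero]
  rw [hz, zero_add] at hmain
  rw [← hmain]
  apply Finset.sum_congr rfl
  intro k hk
  rw [Finset.mem_Icc] at hk
  rcases Nat.lt_or_ge k 2 with hk1 | hk2
  · have hk1' : k = 1 := by omega
    subst hk1'
    congr 1
    have key : ∀ t : ℝ, (hatFn x j t = 0 ∧ hatDeriv x j t = 0)
        ∨ (hatFn y (m + 1) t = hatFn x 1 t ∧ hatDeriv y (m + 1) t = hatDeriv x 1 t) := by
      intro t
      rcases le_or_gt t (x 1) with ht | ht
      · exact Or.inl ⟨aux_hat3_zero_left (by linarith) hxjlt,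
          aux_hat3D_zero_left (by linarith) hxjlt⟩
      · right
        have hym2 : y (m + 1 + 1) = x (1 + 1) := hagree 2 (by omega) (by omega)
        constructor
        · show hat3 (y (m + 1 - 1)) (y (m + 1)) (y (m + 1 + 1)) t
            = hat3 (x (1 - 1)) (x 1) (x (1 + 1)) t
          rw [hym1, hym2]
          exact aux_hat3_congr_left ht
        · show hat3D (y (m + 1 - 1)) (y (m + 1)) (y (m + 1 + 1)) t
            = hat3D (x (1 - 1)) (x 1) (x (1 + 1)) t
          rw [hym1, hym2]
          exact aux_hat3D_congr_left ht
    symm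
    apply aux_bform_congr
    · intro t; rcases key t with h | h
      · rw [h.2, mul_zero, mul_zero]
      · rw [h.2]
    · intro t; rcases key t with h | h
      · rw [h.2, mul_zero, mul_zero]
      · rw [h.1]
    · intro t; rcases key t with h | h
      · rw [h.1, mul_zero, mul_zero]
      · rw [h.1]
  · obtain ⟨hf1, hf2⟩ := aux_hatFn_shift hagree hk2 hk.2
    rw [hf1, hf2]

lemma aux_part1 (n m : ℕ) (hn : 1 ≤ n) (x : ℕ → ℝ) (ε b c : ℝ) (f : ℝ → ℝ)
    (A : Matrix (Fin n) (Fin n) ℝ) (hA : A = stiff ε b c x n) (hAdet : A.det ≠ 0)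
    (Un : ℕ → ℝ)
    (hUn : A *ᵥ (fun j : Fin n => Un ((j : ℕ) + 1))
      = fun j : Fin n => load f x ((j : ℕ) + 1))
    (w : ℕ → ℝ)
    (htr : ∀ j, 2 ≤ j → j ≤ n →
      ∑ k ∈ Finset.Icc 1 n,
          w (m + k) * bform ε b c (hatFn x k) (hatDeriv x k) (hatFn x j) (hatDeriv x j)
        = load f x j) :
    ∃ C : ℝ, (fun j : Fin n => Un ((j : ℕ) + 1) - w (m + (j : ℕ) + 1))
        = C • (A⁻¹ *ᵥ (fun j : Fin n => if (j : ℕ) = 0 then 1 else 0)) := by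
  set d : Fin n → ℝ := fun j : Fin n => Un ((j : ℕ) + 1) - w (m + (j : ℕ) + 1) with hd
  have hrow : ∀ i : Fin n, (i : ℕ) ≠ 0 → (A *ᵥ d) i = 0 := by
    intro i hi
    have hsplit : d = (fun j : Fin n => Un ((j : ℕ) + 1))
        - (fun j : Fin n => w (m + (j : ℕ) + 1)) := rfl
    rw [hsplit, Matrix.mulVec_sub, Pi.sub_apply]
    have h1 : (A *ᵥ fun j : Fin n => Un ((j : ℕ) + 1)) i = load f x ((i : ℕ) + 1) :=
      congrFun hUn i
    have h2 : (A *ᵥ fun j : Fin n => w (m + (j : ℕ) + 1)) i = load f x ((i : ℕ) + 1) := by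
      have := htr ((i : ℕ) + 1) (by omega) (by omega)
      rw [aux_sum_Icc_fin n] at this
      rw [← this]
      simp only [Matrix.mulVec, dotProduct, hA, stiff]
      apply Finset.sum_congr rfl
      intro j _
      rw [mul_comm, Nat.add_assoc]
    rw [h1, h2, sub_self]
  set e1 : Fin n → ℝ := fun j : Fin n => if (j : ℕ) = 0 then 1 else 0 with he1
  refine ⟨(A *ᵥ d) ⟨0, by omega⟩, ?_⟩
  have hAde : A *ᵥ d = (A *ᵥ d) ⟨0, by omega⟩ • e1 := by
    funext i
    by_cases h : (i : ℕ) = 0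
    · have : i = ⟨0, by omega⟩ := Fin.ext h
      rw [this]
      simp [he1, Pi.smul_apply]
    · rw [hrow i h]
      simp [he1, Pi.smul_apply, h]
  have hinv : A⁻¹ *ᵥ (A *ᵥ d) = d := by
    rw [Matrix.mulVec_mulVec, Matrix.nonsing_inv_mul A (isUnit_iff_ne_zero.mpr hAdet),
      Matrix.one_mulVec]
  calc d = A⁻¹ *ᵥ (A *ᵥ d) := hinv.symm
    _ = A⁻¹ *ᵥ ((A *ᵥ d) ⟨0, by omega⟩ • e1) := congrArg (fun v => A⁻¹ *ᵥ v) hAde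
    _ = (A *ᵥ d) ⟨0, by omega⟩ • (A⁻¹ *ᵥ e1) := Matrix.mulVec_smul _ _ _

end Aux

/-- Corollary 3.1: if `w` solves the refined Galerkin system on the grid `y`
obtained from `x` by inserting `m` points `s_k = y k` in `(0, x₁)` (so that the old nodes
satisfy `y (m+i) = x i`), then there is a scalar `C` with
`Uⁿ − (u₁, …, uₙ) = C·A⁻¹e₁` where `e₁ = (1, 0, …, 0)ᵗ` and `uᵢ = w (m+i)`; the same holds
for a second refinement `(y', m', w')`, and consequently for each `2 ≤ i ≤ n` with a sign
change of the nodal differences at `x_{i−1}` and `xᵢ`, the intersection point of the two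
piecewise linear solutions in `(x_{i−1}, xᵢ)` is independent of `m` and of the distribution
of the added points. -/
theorem statement9 (n m m' : ℕ) (hn : 1 ≤ n) (hm : 1 ≤ m) (hm' : 1 ≤ m')
    (x y y' : ℕ → ℝ) (ε b c : ℝ) (f : ℝ → ℝ)
    (hf : ContinuousOn f (Set.Icc 0 1))
    (hx : IsGrid x n) (hy : IsGrid y (m + n)) (hy' : IsGrid y' (m' + n))
    (hagree : ∀ i, 1 ≤ i → i ≤ n + 1 → y (m + i) = x i)
    (hagree' : ∀ i, 1 ≤ i → i ≤ n + 1 → y' (m' + i) = x i)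
    (A : Matrix (Fin n) (Fin n) ℝ) (hA : A = stiff ε b c x n) (hAdet : A.det ≠ 0)
    (Un : ℕ → ℝ)
    (hUn : A *ᵥ (fun j : Fin n => Un ((j : ℕ) + 1))
      = fun j : Fin n => load f x ((j : ℕ) + 1))
    (w w' : ℕ → ℝ)
    (hw : IsGalerkinSol ε b c f y (m + n) w)
    (hw' : IsGalerkinSol ε b c f y' (m' + n) w') :
    (∃ C : ℝ, (fun j : Fin n => Un ((j : ℕ) + 1) - w (m + (j : ℕ) + 1))
        = C • (A⁻¹ *ᵥ (fun j : Fin n => if (j : ℕ) = 0 then 1 else 0))) ∧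
    (∃ C' : ℝ, (fun j : Fin n => Un ((j : ℕ) + 1) - w' (m' + (j : ℕ) + 1))
        = C' • (A⁻¹ *ᵥ (fun j : Fin n => if (j : ℕ) = 0 then 1 else 0))) ∧
    (∀ i : ℕ, 2 ≤ i → i ≤ n →
      (Un (i - 1) - w (m + i - 1)) * (Un i - w (m + i)) < 0 →
      (Un (i - 1) - w' (m' + i - 1)) * (Un i - w' (m' + i)) < 0 →
      ∃ t ∈ Set.Ioo (x (i - 1)) (x i),
        affInterp (x (i - 1)) (x i) (Un (i - 1)) (Un i) t
          = affInterp (x (i - 1)) (x i) (w (m + i - 1)) (w (m + i)) t ∧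
        affInterp (x (i - 1)) (x i) (Un (i - 1)) (Un i) t
          = affInterp (x (i - 1)) (x i) (w' (m' + i - 1)) (w' (m' + i)) t ∧
        ∀ t' ∈ Set.Ioo (x (i - 1)) (x i),
          (affInterp (x (i - 1)) (x i) (Un (i - 1)) (Un i) t'
              = affInterp (x (i - 1)) (x i) (w (m + i - 1)) (w (m + i)) t' ∨
            affInterp (x (i - 1)) (x i) (Un (i - 1)) (Un i) t'
              = affInterp (x (i - 1)) (x i) (w' (m' + i - 1)) (w' (m' + i)) t') → t' = t) := by
  have htr := aux_transfer n m hn hm x y ε b c f hx hy hagree w hw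
  have htr' := aux_transfer n m' hn hm' x y' ε b c f hx hy' hagree' w' hw'
  obtain ⟨C, hC⟩ := aux_part1 n m hn x ε b c f A hA hAdet Un hUn w htr
  obtain ⟨C', hC'⟩ := aux_part1 n m' hn x ε b c f A hA hAdet Un hUn w' htr'
  refine ⟨⟨C, hC⟩, ⟨C', hC'⟩, ?_⟩
  intro i hi2 hin hsgn hsgn'
  set v : Fin n → ℝ := A⁻¹ *ᵥ (fun j : Fin n => if (j : ℕ) = 0 then 1 else 0) with hv
  have hCv : ∀ j : Fin n, Un ((j : ℕ) + 1) - w (m + (j : ℕ) + 1) = C * v j := by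
    intro j
    have := congrFun hC j
    simpa using this
  have hCv' : ∀ j : Fin n, Un ((j : ℕ) + 1) - w' (m' + (j : ℕ) + 1) = C' * v j := by
    intro j
    have := congrFun hC' j
    simpa using this
  set j1 : Fin n := ⟨i - 2, by omega⟩ with hj1
  set j2 : Fin n := ⟨i - 1, by omega⟩ with hj2
  have hd1 : Un (i - 1) - w (m + i - 1) = C * v j1 := by
    have h := hCv j1
    rwa [show ((j1 : ℕ) + 1) = i - 1 by simp [hj1]; omega,
      show (m + (j1 : ℕ) + 1) = m + i - 1 by simp [hj1]; omega] at h
  have hd2 : Un i - w (m + i) = C * v j2 := by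
    have h := hCv j2
    rwa [show ((j2 : ℕ) + 1) = i by simp [hj2]; omega,
      show (m + (j2 : ℕ) + 1) = m + i by simp [hj2]; omega] at h
  have hd1' : Un (i - 1) - w' (m' + i - 1) = C' * v j1 := by
    have h := hCv' j1
    rwa [show ((j1 : ℕ) + 1) = i - 1 by simp [hj1]; omega,
      show (m' + (j1 : ℕ) + 1) = m' + i - 1 by simp [hj1]; omega] at h
  have hd2' : Un i - w' (m' + i) = C' * v j2 := by
    have h := hCv' j2
    rwa [show ((j2 : ℕ) + 1) = i by simp [hj2]; omega,
      show (m' + (j2 : ℕ) + 1) = m' + i by simp [hj2]; omega] at h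
  set p : ℝ := v j1
  set q : ℝ := v j2
  rw [hd1, hd2] at hsgn
  rw [hd1', hd2'] at hsgn'
  have hpq : p * q < 0 := by
    by_contra hcon
    push_neg at hcon
    nlinarith [mul_nonneg (mul_self_nonneg C) hcon]
  have hC0 : C ≠ 0 := by
    intro h
    rw [h] at hsgn
    simp at hsgn
  have hC0' : C' ≠ 0 := by
    intro h
    rw [h] at hsgn'
    simp at hsgn'
  have hαβ : x (i - 1) < x i := by
    have := hx.2.2 (i - 1) (by omega)
    rwa [show i - 1 + 1 = i by omega] at this
  have hw1 : w (m + i - 1) = Un (i - 1) - C * p := by linarith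
  have hw2 : w (m + i) = Un i - C * q := by linarith
  have hw1' : w' (m' + i - 1) = Un (i - 1) - C' * p := by linarith
  have hw2' : w' (m' + i) = Un i - C' * q := by linarith
  refine ⟨x (i - 1) + p * (x i - x (i - 1)) / (p - q), aux_cross_pt_mem hαβ hpq, ?_, ?_, ?_⟩
  · rw [hw1, hw2]
    exact (aux_cross_iff (Un (i - 1)) (Un i) hαβ hpq hC0 _).mpr rfl
  · rw [hw1', hw2']
    exact (aux_cross_iff (Un (i - 1)) (Un i) hαβ hpq hC0' _).mpr rfl
  · intro t' ht' hor
    rcases hor with h | h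
    · rw [hw1, hw2] at h
      exact (aux_cross_iff (Un (i - 1)) (Un i) hαβ hpq hC0 t').mp h
    · rw [hw1', hw2'] at h
      exact (aux_cross_iff (Un (i - 1)) (Un i) hαβ hpq hC0' t').mp h
end
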